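/- Assume κ is h-admissible and normalized. For every μ ∈ 𝒫^ℓ_n(h), the distinguished path t^μ satisfies t^μ(k) = pt(μ^{(k)}) for all 0 ≤ k ≤ n (in particular t^μ is a dominant path), and deg(t^μ) = 0. -/

import Mathlib

namespace BC

/-- A node `(r, c, m)`: row `r ≥ 1`, column `c ≥ 1` (1-based), component `m` (0-based). -/
abbrev Node : Type := ℕ × ℕ × ℕ

/-- An `ℓ`-multipartition: `row m r` is the length of the `(r+1)`-st row of the
`(m+1)`-st component. -/
structure MultiPartition (ℓ : ℕ) : Type where
  row : ℕ → ℕ → ℕ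
  antitone : ∀ m r, row m (r + 1) ≤ row m r
  comp_bound : ∀ m, ℓ ≤ m → ∀ r, row m r = 0
  row_finite : ∀ m, ∃ R, ∀ r, R ≤ r → row m r = 0

/-- The number of boxes of a multipartition. -/
noncomputable def size {ℓ : ℕ} (lam : MultiPartition ℓ) : ℕ :=
  ∑ᶠ (m : ℕ), ∑ᶠ (r : ℕ), lam.row m r

/-- The Young diagram of a multipartition, as a set of nodes. -/
def diag {ℓ : ℕ} (lam : MultiPartition ℓ) : Set Node :=
  {b | 1 ≤ b.1 ∧ 1 ≤ b.2.1 ∧ b.2.1 ≤ lam.row b.2.2 (b.1 - 1)}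

/-- The residue `κ_m + c - r` of a node. -/
def res (e : ℕ) (κ : ℕ → ZMod e) (b : Node) : ZMod e :=
  κ b.2.2 + (b.2.1 : ZMod e) - (b.1 : ZMod e)

/-- The (integral part of the) real-line position of a node: `m + ℓ(r - c)` (with
1-based component index). -/
def thetaPos (ℓ : ℕ) (b : Node) : ℤ :=
  ((b.2.2 : ℤ) + 1) + (ℓ : ℤ) * ((b.1 : ℤ) - (b.2.1 : ℤ))

/-- `NodeDom ℓ b b'` means `b ▷_θ b'` (`b` θ-dominates `b'`; `b'` is to the right of `b`). -/
def NodeDom (ℓ : ℕ) (b b' : Node) : Prop :=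
  thetaPos ℓ b < thetaPos ℓ b' ∨
    (thetaPos ℓ b = thetaPos ℓ b' ∧ b.1 + b.2.1 < b'.1 + b'.2.1)

/-- A set of nodes is the Young diagram of some `ℓ`-multipartition. -/
def IsDiag (ℓ : ℕ) (D : Set Node) : Prop := ∃ lam : MultiPartition ℓ, diag lam = D

/-- `b` is a removable node of the diagram `D`. -/
def RemD (ℓ : ℕ) (D : Set Node) (b : Node) : Prop := b ∈ D ∧ IsDiag ℓ (D \ {b})

/-- `b` is an addable node (in one of the first `h` columns) of the diagram `D`. -/
def AddD (h ℓ : ℕ) (D : Set Node) (b : Node) : Prop :=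
  1 ≤ b.2.1 ∧ b.2.1 ≤ h ∧ b ∉ D ∧ IsDiag ℓ (D ∪ {b})

/-- All components of `lam` have at most `h` columns. -/
def HCols (h : ℕ) {ℓ : ℕ} (lam : MultiPartition ℓ) : Prop := ∀ m r, lam.row m r ≤ h

/-- `κ` is `h`-admissible: for every `i ∈ ℤ/eℤ` at most one component index `m < ℓ`
satisfies `κ m ∈ {i, i+1, …, i+h-1}`. -/
def HAdmissible (e h ℓ : ℕ) (κ : ℕ → ZMod e) : Prop :=
  ∀ (i : ZMod e) (m t : ℕ), m < ℓ → t < ℓ →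
    (∃ d : ℕ, d < h ∧ κ m = i + (d : ZMod e)) →
    (∃ d : ℕ, d < h ∧ κ t = i + (d : ZMod e)) → m = t

/-- `κ` is normalized: lifting to `{0, …, e-1}` one has `κ_1 < κ_2 < ⋯ < κ_ℓ` and
`κ_ℓ + h ≢ κ_1 (mod e)`. -/
def Normalized (e h ℓ : ℕ) (κ : ℕ → ZMod e) : Prop :=
  (∀ m t : ℕ, m < t → t < ℓ → (κ m).val < (κ t).val) ∧
    κ (ℓ - 1) + (h : ZMod e) ≠ κ 0

/-- The shift vector `ρ` (0-based index `a = h·(m-1) + (i-1)` gives `ρ_a = e - κ_m - i + 1`). -/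
def rhoZ (e h : ℕ) (κ : ℕ → ZMod e) (a : ℕ) : ℤ :=
  (e : ℤ) - ((κ (a / h)).val : ℤ) - ((a % h : ℕ) : ℤ)

/-- The pairing `⟨x + ρ, ε_i - ε_j⟩`. -/
def pairV (e h : ℕ) (κ : ℕ → ZMod e) (x : ℕ → ℝ) (i j : ℕ) : ℝ :=
  (x i + (rhoZ e h κ i : ℝ)) - (x j + (rhoZ e h κ j : ℝ))

/-- `x` lies on the hyperplane `E(ε_i - ε_j, re)`. -/
def OnWall (e h : ℕ) (κ : ℕ → ZMod e) (x : ℕ → ℝ) (i j : ℕ) (r : ℤ) : Prop :=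
  pairV e h κ x i j = (r : ℝ) * (e : ℝ)

/-- `x ∈ E^<(ε_i - ε_j, re)`: `⟨x+ρ,α⟩ - re` and `⟨ρ,α⟩ - re` are nonzero of the same sign. -/
def InLt (e h : ℕ) (κ : ℕ → ZMod e) (x : ℕ → ℝ) (i j : ℕ) (r : ℤ) : Prop :=
  0 < (pairV e h κ x i j - (r : ℝ) * (e : ℝ)) *
      (pairV e h κ (fun _ => 0) i j - (r : ℝ) * (e : ℝ))

/-- `x ∈ E^>(ε_i - ε_j, re)`: `⟨x+ρ,α⟩ - re` and `⟨ρ,α⟩ - re` are nonzero of opposite signs. -/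
def InGt (e h : ℕ) (κ : ℕ → ZMod e) (x : ℕ → ℝ) (i j : ℕ) (r : ℤ) : Prop :=
  (pairV e h κ x i j - (r : ℝ) * (e : ℝ)) *
      (pairV e h κ (fun _ => 0) i j - (r : ℝ) * (e : ℝ)) < 0

/-- The reflection `s_{ε_i - ε_j, re} · x = x - (⟨x+ρ,α⟩ - re) α`. -/
def reflV (e h : ℕ) (κ : ℕ → ZMod e) (i j : ℕ) (r : ℤ) (x : ℕ → ℝ) : ℕ → ℝ :=
  fun a => x a - (pairV e h κ x i j - (r : ℝ) * (e : ℝ)) *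
    ((if a = i then (1 : ℝ) else 0) - (if a = j then (1 : ℝ) else 0))

-- The local degree contribution `d_{α,r}(x,y)` for `α = ε_i - ε_j`.
open Classical in
noncomputable def dval (e h : ℕ) (κ : ℕ → ZMod e) (x y : ℕ → ℝ) (i j : ℕ) (r : ℤ) : ℤ :=
  if OnWall e h κ x i j r ∧ InLt e h κ y i j r then 1
  else if InGt e h κ x i j r ∧ OnWall e h κ y i j r then -1
  else 0

-- The degree `d(x, y) = Σ_{α ∈ Φ⁺, r ∈ ℤ} d_{α,r}(x,y)` of a single step.
open Classical in
noncomputable def stepDeg (e h ℓ : ℕ) (κ : ℕ → ZMod e) (x y : ℕ → ℝ) : ℤ :=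
  ∑ i ∈ Finset.range (h * ℓ), ∑ j ∈ Finset.range (h * ℓ),
    if i < j then ∑ᶠ r : ℤ, dval e h κ x y i j r else 0

/-- The `k`-th point `s(k) = ε_{s(1)} + ⋯ + ε_{s(k)}` of a path (with 0-based steps). -/
def pts (s : ℕ → ℕ) (k : ℕ) : ℕ → ℝ :=
  fun a => ((Finset.filter (fun i => s i = a) (Finset.range k)).card : ℝ)

/-- `s` is a (normalized) path of length `n` with steps among `ε_1, …, ε_N`. -/
def IsPath (N n : ℕ) (s : ℕ → ℕ) : Prop :=
  (∀ k, k < n → s k < N) ∧ (∀ k, n ≤ k → s k = 0)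

/-- The degree of a path of length `n`. -/
noncomputable def pathDeg (e h ℓ : ℕ) (κ : ℕ → ZMod e) (n : ℕ) (s : ℕ → ℕ) : ℤ :=
  ∑ k ∈ Finset.range n, stepDeg e h ℓ κ (pts s k) (pts s (k + 1))

/-- `t` is obtained from `s` by one reflection `s^k_{α,re}` (at a point of `s` lying
on the corresponding hyperplane). -/
def ReflStep (e h ℓ n : ℕ) (κ : ℕ → ZMod e) (s t : ℕ → ℕ) : Prop :=
  IsPath (h * ℓ) n s ∧ IsPath (h * ℓ) n t ∧
  ∃ (k i j : ℕ) (r : ℤ), 1 ≤ k ∧ k ≤ n ∧ i < j ∧ j < h * ℓ ∧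
    OnWall e h κ (pts s k) i j r ∧
    (∀ l, l ≤ k → pts t l = pts s l) ∧
    (∀ l, k ≤ l → l ≤ n → pts t l = reflV e h κ i j r (pts s l))

/-- `PathSim … s t` : the path `t` can be obtained from `s` by finitely many reflections,
i.e. `t ∼ s`. -/
def PathSim (e h ℓ n : ℕ) (κ : ℕ → ZMod e) (s t : ℕ → ℕ) : Prop :=
  Relation.ReflTransGen (ReflStep e h ℓ n κ) s t

/-- A path is dominant if all of its points lie in the (closed interior of the)
dominant Weyl chamber. -/
def DominantPath (e h ℓ n : ℕ) (κ : ℕ → ZMod e) (s : ℕ → ℕ) : Prop :=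
  ∀ k, k ≤ n → ∀ m i j, m < ℓ → i < j → j < h →
    0 < pairV e h κ (pts s k) (h * m + i) (h * m + j)

/-- The length of the `i`-th column (1-based) of the `(m+1)`-st component. -/
noncomputable def colLen {ℓ : ℕ} (lam : MultiPartition ℓ) (m i : ℕ) : ℕ :=
  Set.ncard {r : ℕ | i ≤ lam.row m r}

/-- The point `pt(λ) ∈ E` associated to a multipartition. -/
noncomputable def ptv (h : ℕ) {ℓ : ℕ} (lam : MultiPartition ℓ) : ℕ → ℝ :=
  fun a => (colLen lam (a / h) (a % h + 1) : ℝ)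

/-- The point of `E` associated to a Young diagram (as a set of nodes). -/
noncomputable def ptD (h : ℕ) (D : Set Node) : ℕ → ℝ :=
  fun a => (Set.ncard {r : ℕ | ((r + 1 : ℕ), ((a % h) + 1 : ℕ), (a / h : ℕ)) ∈ D} : ℝ)

/-- `X` is the least dominant removable node of `D`: it is removable and θ-dominated by
every other removable node. -/
def IsLeastRem (ℓ : ℕ) (D : Set Node) (X : Node) : Prop :=
  RemD ℓ D X ∧ ∀ Y, RemD ℓ D Y → Y ≠ X → NodeDom ℓ Y X

/-- The least dominant removable node of a diagram (chosen by `Classical.epsilon`). -/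
noncomputable def leastRem (ℓ : ℕ) (D : Set Node) : Node :=
  Classical.epsilon (IsLeastRem ℓ D)

/-- `PDiag ℓ D j` is the diagram `D` with its least dominant removable node removed `j`
times; for `D = [μ]` with `|μ| = n` this is `μ^{(n-j)}`. -/
noncomputable def PDiag (ℓ : ℕ) (D : Set Node) : ℕ → Set Node
  | 0 => D
  | j + 1 => PDiag ℓ D j \ {leastRem ℓ (PDiag ℓ D j)}

/-- The distinguished path `t^μ` of length `n`: its `k`-th step (0-based) is the basis
direction of the column of `X_{k+1}`, the least dominant removable node of `μ^{(k+1)}`. -/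
noncomputable def tPath (h ℓ n : ℕ) (μ : MultiPartition ℓ) : ℕ → ℕ :=
  fun k =>
    if k < n then
      h * (leastRem ℓ (PDiag ℓ (diag μ) (n - 1 - k))).2.2 +
        ((leastRem ℓ (PDiag ℓ (diag μ) (n - 1 - k))).2.1 - 1)
    else 0

/-- `u ↑_{α,re} v` : `u = s_{α,re}·v`, `u ∈ E^<(α,re)`, `v ∈ E^>(α,re)`. -/
def UpStep (e h ℓ : ℕ) (κ : ℕ → ZMod e) (u v : ℕ → ℝ) : Prop :=
  ∃ (i j : ℕ) (r : ℤ), i < j ∧ j < h * ℓ ∧ u = reflV e h κ i j r v ∧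
    InLt e h κ u i j r ∧ InGt e h κ v i j r

/-- The strong linkage order: `Up … u v` means `u ↑ v`. -/
def Up (e h ℓ : ℕ) (κ : ℕ → ZMod e) : (ℕ → ℝ) → (ℕ → ℝ) → Prop :=
  Relation.ReflTransGen (UpStep e h ℓ κ)

/-- The length `ℓ(v)`: the number of hyperplanes lying strictly between `v` and the
origin. -/
noncomputable def lenPt (e h ℓ : ℕ) (κ : ℕ → ZMod e) (v : ℕ → ℝ) : ℕ :=
  Set.ncard {p : ℕ × ℕ × ℤ | p.1 < p.2.1 ∧ p.2.1 < h * ℓ ∧ InGt e h κ v p.1 p.2.1 p.2.2}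

/-- The loading `I_{(r,c,m)} = m + ℓ(r-c) + (r+c)ε` of a node (with 1-based component). -/
def load (ℓ : ℕ) (ε : ℝ) (b : Node) : ℝ :=
  ((b.2.2 : ℝ) + 1) + (ℓ : ℝ) * ((b.1 : ℝ) - (b.2.1 : ℝ)) + ((b.1 : ℝ) + (b.2.1 : ℝ)) * ε

/-- `T` is a residue-respecting semistandard tableau of shape the diagram `D` and weight
the diagram `Dw`, normalized to vanish off `D`. -/
def IsSStd (e ℓ : ℕ) (κ : ℕ → ZMod e) (ε : ℝ) (D Dw : Set Node) (T : Node → ℝ) : Prop :=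
  Set.BijOn T D (load ℓ ε '' Dw) ∧
  (∀ b ∈ D, b.1 = 1 → b.2.1 = 1 → ((b.2.2 : ℝ) + 1) < T b) ∧
  (∀ b ∈ D, 2 ≤ b.1 → T (b.1 - 1, b.2.1, b.2.2) + (ℓ : ℝ) < T b) ∧
  (∀ b ∈ D, 2 ≤ b.2.1 → T (b.1, b.2.1 - 1, b.2.2) - (ℓ : ℝ) < T b) ∧
  (∀ b ∈ D, ∀ b' ∈ Dw, T b = load ℓ ε b' → res e κ b = res e κ b') ∧
  (∀ b, b ∉ D → T b = 0)

/-- The node `Y_{k+1}` of the tableau `T`: the node of the shape diagram whose entry is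
the loading of `X_{k+1}`. -/
noncomputable def Ynd (ℓ n : ℕ) (ε : ℝ) (Dlam Dmu : Set Node) (T : Node → ℝ) (k : ℕ) :
    Node :=
  Classical.epsilon (fun b : Node =>
    b ∈ Dlam ∧ T b = load ℓ ε (leastRem ℓ (PDiag ℓ Dmu (n - 1 - k))))

/-- The path `ω(T)` associated to a semistandard tableau. -/
noncomputable def omegaT (h ℓ n : ℕ) (ε : ℝ) (Dlam Dmu : Set Node) (T : Node → ℝ) :
    ℕ → ℕ :=
  fun k =>
    if k < n then
      h * (Ynd ℓ n ε Dlam Dmu T k).2.2 + ((Ynd ℓ n ε Dlam Dmu T k).2.1 - 1)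
    else 0

/-- The shape `λ^{(k)}` of the restriction of the tableau `T` to entries in `I_{μ^{(k)}}`. -/
noncomputable def LShape (ℓ n : ℕ) (ε : ℝ) (Dlam Dmu : Set Node) (T : Node → ℝ) (k : ℕ) :
    Set Node :=
  {b | b ∈ Dlam ∧ T b ∈ load ℓ ε '' PDiag ℓ Dmu (n - k)}

/-- The degree of a semistandard tableau, computed from its component word. -/
noncomputable def degT (e h ℓ n : ℕ) (κ : ℕ → ZMod e) (ε : ℝ) (Dlam Dmu : Set Node)
    (T : Node → ℝ) : ℤ :=
  ∑ k ∈ Finset.range n,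
    ((Set.ncard {A | AddD h ℓ (LShape ℓ n ε Dlam Dmu T k) A ∧
        res e κ A = res e κ (Ynd ℓ n ε Dlam Dmu T k) ∧
        NodeDom ℓ (Ynd ℓ n ε Dlam Dmu T k) A} : ℤ) -
      (Set.ncard {R | RemD ℓ (LShape ℓ n ε Dlam Dmu T k) R ∧
        res e κ R = res e κ (Ynd ℓ n ε Dlam Dmu T k) ∧
        NodeDom ℓ (Ynd ℓ n ε Dlam Dmu T k) R} : ℤ))

/-- The θ-dominance order on multipartitions: `ThetaDomMP e ℓ κ μ lam` means `μ ⊴_θ λ`. -/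
noncomputable def ThetaDomMP (e ℓ : ℕ) (κ : ℕ → ZMod e) (μ lam : MultiPartition ℓ) : Prop :=
  ∀ b ∈ diag μ,
    Set.ncard {b' | b' ∈ diag μ ∧ res e κ b' = res e κ b ∧ NodeDom ℓ b' b} ≤
      Set.ncard {b' | b' ∈ diag lam ∧ res e κ b' = res e κ b ∧ NodeDom ℓ b' b}

/-- The multipartition `det_h(λ)`, obtained by prepending a row of length `h` to each
component. -/
def detMP (h : ℕ) {ℓ : ℕ} (lam : MultiPartition ℓ) (hc : HCols h lam) : MultiPartition ℓ where
  row m r := if m < ℓ then (if r = 0 then h else lam.row m (r - 1)) else 0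
  antitone m r := by
    by_cases hm : m < ℓ
    · by_cases hr : r = 0
      · subst hr
        simpa [hm] using hc m 0
      · have h2 : r - 1 + 1 = r := Nat.succ_pred_eq_of_pos (Nat.pos_of_ne_zero hr)
        have h3 := lam.antitone m (r - 1)
        rw [h2] at h3
        simpa [hm, hr] using h3
    · simp [hm]
  comp_bound m hm r := by simp [Nat.not_lt.mpr hm]
  row_finite m := by
    obtain ⟨R, hR⟩ := lam.row_finite m
    refine ⟨R + 1, fun r hr => ?_⟩
    by_cases hm : m < ℓ
    · have hr0 : r ≠ 0 := by omega
      simp only [hm, if_true, hr0, if_false]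
      exact hR (r - 1) (by omega)
    · simp [hm]

/-- The path `det(s)`: first the `N = hℓ` steps `ε_1, …, ε_{hℓ}`, then the steps of `s`. -/
def detPath (N n : ℕ) (s : ℕ → ℕ) : ℕ → ℕ :=
  fun k => if k < N then k else if k < N + n then s (k - N) else 0


/-! ### Auxiliary lemmas -/

lemma row_mono {ℓ : ℕ} (μ : MultiPartition ℓ) (m : ℕ) {r r' : ℕ} (hrr : r ≤ r') :
    μ.row m r' ≤ μ.row m r := by
  induction hrr with
  | refl => exact le_rfl
  | step _ ih => exact le_trans (μ.antitone m _) ih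

lemma downset_iff {S : Set ℕ} (hfin : S.Finite) (hdc : ∀ a b : ℕ, a ≤ b → b ∈ S → a ∈ S)
    (k : ℕ) : k ∈ S ↔ k < S.ncard := by
  rcases S.eq_empty_or_nonempty with rfl | hne
  · simp
  · have hF : hfin.toFinset.Nonempty := (Set.Finite.toFinset_nonempty hfin).2 hne
    have hMS : hfin.toFinset.max' hF ∈ S := by
      have := hfin.toFinset.max'_mem hF
      rwa [Set.Finite.mem_toFinset] at this
    set M := hfin.toFinset.max' hF with hM
    have hSeq : S = ↑(Finset.range (M + 1)) := by
      ext b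
      simp only [Finset.coe_range, Set.mem_Iio]
      constructor
      · intro hb
        have := hfin.toFinset.le_max' b ((Set.Finite.mem_toFinset hfin).2 hb)
        omega
      · intro hb
        exact hdc b M (by omega) hMS
    rw [hSeq, Set.ncard_coe_finset, Finset.card_range]
    simp

def colSet {ℓ : ℕ} (μ : MultiPartition ℓ) (m i : ℕ) : Set ℕ := {r : ℕ | i ≤ μ.row m r}

lemma colLen_eq_ncard {ℓ : ℕ} (μ : MultiPartition ℓ) (m i : ℕ) :
    colLen μ m i = (colSet μ m i).ncard := rfl

lemma colSet_finite {ℓ : ℕ} (μ : MultiPartition ℓ) (m : ℕ) {i : ℕ} (hi : 1 ≤ i) :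
    (colSet μ m i).Finite := by
  obtain ⟨R, hR⟩ := μ.row_finite m
  apply (Set.finite_Iio R).subset
  intro r hr
  simp only [colSet, Set.mem_setOf_eq] at hr
  simp only [Set.mem_Iio]
  by_contra hc
  have := hR r (by omega)
  omega

lemma mem_colSet_iff {ℓ : ℕ} (μ : MultiPartition ℓ) (m : ℕ) {i : ℕ} (hi : 1 ≤ i) (r : ℕ) :
    i ≤ μ.row m r ↔ r < colLen μ m i := by
  rw [colLen_eq_ncard]
  exact downset_iff (colSet_finite μ m hi)
    (fun a b hab hb => le_trans hb (row_mono μ m hab)) r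

lemma colLen_anti {ℓ : ℕ} (μ : MultiPartition ℓ) (m : ℕ) {i i' : ℕ} (hi : 1 ≤ i)
    (hii : i ≤ i') : colLen μ m i' ≤ colLen μ m i := by
  rw [colLen_eq_ncard, colLen_eq_ncard]
  exact Set.ncard_le_ncard (fun r hr => le_trans hii hr) (colSet_finite μ m hi)

lemma colLen_congr {ℓ : ℕ} (μ : MultiPartition ℓ) (m : ℕ) (i i' : ℕ)
    (hiff : ∀ r, i ≤ μ.row m r ↔ i' ≤ μ.row m r) : colLen μ m i = colLen μ m i' := by
  rw [colLen_eq_ncard, colLen_eq_ncard]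
  congr 1
  ext r
  simp only [colSet, Set.mem_setOf_eq]
  exact hiff r

lemma colLen_row_last {ℓ : ℕ} (μ : MultiPartition ℓ) (M : ℕ) (hK : 1 ≤ colLen μ M 1) :
    colLen μ M (μ.row M (colLen μ M 1 - 1)) = colLen μ M 1 := by
  have hcX1 : 1 ≤ μ.row M (colLen μ M 1 - 1) :=
    (mem_colSet_iff μ M le_rfl (colLen μ M 1 - 1)).2 (by omega)
  apply colLen_congr
  intro r
  constructor
  · intro hr; omega
  · intro hr
    have hrK : r < colLen μ M 1 := (mem_colSet_iff μ M le_rfl r).1 hr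
    exact le_trans (row_mono μ M (show r ≤ colLen μ M 1 - 1 by omega)) le_rfl

/-! ### decremented multipartition -/

def decMP' {ℓ : ℕ} (μ : MultiPartition ℓ) (M r0 : ℕ)
    (h2 : μ.row M (r0 + 1) < μ.row M r0) : MultiPartition ℓ where
  row m r := μ.row m r - (if m = M ∧ r = r0 then 1 else 0)
  antitone m r := by
    have h3 := μ.antitone m r
    split_ifs with hc1 hc2 hc2
    · omega
    · omega
    · obtain ⟨rfl, rfl⟩ := hc2
      omega
    · omega
  comp_bound m hm r := by
    rw [μ.comp_bound m hm r]
    exact Nat.zero_sub _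
  row_finite m := by
    obtain ⟨R, hR⟩ := μ.row_finite m
    refine ⟨R, fun r hr => ?_⟩
    rw [hR r hr]
    exact Nat.zero_sub _

lemma diag_decMP' {ℓ : ℕ} (μ : MultiPartition ℓ) (M r0 : ℕ)
    (h2 : μ.row M (r0 + 1) < μ.row M r0) :
    diag (decMP' μ M r0 h2) = diag μ \ {((r0 + 1 : ℕ), μ.row M r0, M)} := by
  ext b
  obtain ⟨r, c, m⟩ := b
  simp only [diag, decMP', Set.mem_setOf_eq, Set.mem_diff, Set.mem_singleton_iff,
    Prod.mk.injEq]
  constructor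
  · rintro ⟨hr, hc, hle⟩
    by_cases hcase : m = M ∧ r - 1 = r0
    · obtain ⟨rfl, hr0⟩ := hcase
      rw [if_pos ⟨rfl, hr0⟩] at hle
      rw [hr0] at hle
      refine ⟨⟨hr, hc, ?_⟩, ?_⟩
      · rw [hr0]; omega
      · rintro ⟨-, hceq, -⟩; omega
    · rw [if_neg hcase] at hle
      refine ⟨⟨hr, hc, by omega⟩, ?_⟩
      rintro ⟨rfl, rfl, rfl⟩
      exact hcase ⟨rfl, by omega⟩
  · rintro ⟨⟨hr, hc, hle⟩, hne⟩
    refine ⟨hr, hc, ?_⟩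
    by_cases hcase : m = M ∧ r - 1 = r0
    · obtain ⟨rfl, hr0⟩ := hcase
      rw [if_pos ⟨rfl, hr0⟩, hr0]
      rw [hr0] at hle
      have hreq : r = r0 + 1 := by omega
      have hcne : c ≠ μ.row m r0 := fun hceq => hne ⟨hreq, hceq, rfl⟩
      omega
    · rw [if_neg hcase]; omega

lemma colLen_decMP_eq {ℓ : ℕ} (μ : MultiPartition ℓ) (M r0 : ℕ)
    (h2 : μ.row M (r0 + 1) < μ.row M r0) (m i : ℕ)
    (hne : m ≠ M ∨ i ≠ μ.row M r0) :
    colLen (decMP' μ M r0 h2) m i = colLen μ m i := by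
  rw [colLen_eq_ncard, colLen_eq_ncard]
  congr 1
  ext r
  simp only [colSet, Set.mem_setOf_eq, decMP']
  split_ifs with hc
  · obtain ⟨rfl, rfl⟩ := hc
    rcases hne with hne | hne
    · exact absurd rfl hne
    · omega
  · omega

lemma colLen_decMP_last {ℓ : ℕ} (μ : MultiPartition ℓ) (M r0 : ℕ)
    (h2 : μ.row M (r0 + 1) < μ.row M r0) :
    colLen (decMP' μ M r0 h2) M (μ.row M r0) + 1 = colLen μ M (μ.row M r0) := by
  have hpos : 1 ≤ μ.row M r0 := by omega
  have hset : colSet (decMP' μ M r0 h2) M (μ.row M r0)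
      = colSet μ M (μ.row M r0) \ {r0} := by
    ext r
    simp only [colSet, Set.mem_setOf_eq, decMP', Set.mem_diff, Set.mem_singleton_iff]
    split_ifs with hc
    · obtain ⟨-, rfl⟩ := hc
      omega
    · have hrne : ¬ r = r0 := fun hr => hc (by simp [hr])
      constructor
      · intro hle; exact ⟨by omega, hrne⟩
      · intro hle; omega
  rw [colLen_eq_ncard, colLen_eq_ncard, hset]
  exact Set.ncard_diff_singleton_add_one
    (by simp : r0 ∈ {r : ℕ | μ.row M r0 ≤ μ.row M r}) (colSet_finite μ M hpos)

lemma colLen_decMP_le {ℓ : ℕ} (μ : MultiPartition ℓ) (M r0 : ℕ)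
    (h2 : μ.row M (r0 + 1) < μ.row M r0) (m i : ℕ) (hi : 1 ≤ i) :
    colLen (decMP' μ M r0 h2) m i ≤ colLen μ m i := by
  rw [colLen_eq_ncard, colLen_eq_ncard]
  apply Set.ncard_le_ncard _ (colSet_finite μ m hi)
  intro r hr
  simp only [colSet, Set.mem_setOf_eq, decMP'] at hr ⊢
  split_ifs at hr <;> omega

lemma hcols_decMP {ℓ h : ℕ} (μ : MultiPartition ℓ) (hc : HCols h μ) (M r0 : ℕ)
    (h2 : μ.row M (r0 + 1) < μ.row M r0) : HCols h (decMP' μ M r0 h2) :=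
  fun m r => le_trans (Nat.sub_le _ _) (hc m r)

lemma decMP'_row_ne {ℓ : ℕ} (μ : MultiPartition ℓ) (M r0 : ℕ)
    (h2 : μ.row M (r0 + 1) < μ.row M r0) (m r : ℕ) (hm : m ≠ M) :
    (decMP' μ M r0 h2).row m r = μ.row m r := by
  show μ.row m r - _ = _
  rw [if_neg (fun hc => hm hc.1)]
  omega
/-! ### size lemmas -/

lemma exists_bound {ℓ : ℕ} (μ : MultiPartition ℓ) : ∃ R, ∀ m r, R ≤ r → μ.row m r = 0 := by
  choose f hf using μ.row_finite
  refine ⟨(Finset.range ℓ).sup f, fun m r hr => ?_⟩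
  rcases Nat.lt_or_ge m ℓ with hm | hm
  · exact hf m r (le_trans (Finset.le_sup (Finset.mem_range.2 hm)) hr)
  · exact μ.comp_bound m hm r

lemma size_eq_sum {ℓ : ℕ} (μ : MultiPartition ℓ) {R : ℕ}
    (hR : ∀ m r, R ≤ r → μ.row m r = 0) :
    size μ = ∑ m ∈ Finset.range ℓ, ∑ r ∈ Finset.range R, μ.row m r := by
  have hinner : ∀ m, (∑ᶠ r, μ.row m r) = ∑ r ∈ Finset.range R, μ.row m r := by
    intro m
    apply finsum_eq_sum_of_support_subset
    intro r hr
    simp only [Function.mem_support] at hr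
    simp only [Finset.coe_range, Set.mem_Iio]
    by_contra hcon
    exact hr (hR m r (by omega))
  unfold size
  rw [finsum_eq_sum_of_support_subset _ (s := Finset.range ℓ) ?_]
  · exact Finset.sum_congr rfl fun m _ => hinner m
  · intro m hm
    simp only [Function.mem_support] at hm
    simp only [Finset.coe_range, Set.mem_Iio]
    by_contra hcon
    apply hm
    rw [hinner m]
    exact Finset.sum_eq_zero fun r _ => μ.comp_bound m (by omega) r

lemma size_decMP {ℓ : ℕ} (μ : MultiPartition ℓ) (M r0 : ℕ)
    (h2 : μ.row M (r0 + 1) < μ.row M r0) :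
    size μ = size (decMP' μ M r0 h2) + 1 := by
  have hMl : M < ℓ := by
    by_contra hM
    have := μ.comp_bound M (by omega) r0
    omega
  obtain ⟨R, hR⟩ := exists_bound μ
  have hR1 : ∀ m r, max R (r0 + 1) ≤ r → μ.row m r = 0 := fun m r hr => hR m r (by omega)
  have hR2 : ∀ m r, max R (r0 + 1) ≤ r → (decMP' μ M r0 h2).row m r = 0 := by
    intro m r hr
    show μ.row m r - _ = 0
    rw [hR1 m r hr]
    exact Nat.zero_sub _
  have hr0R : r0 < max R (r0 + 1) := by omega
  rw [size_eq_sum μ hR1, size_eq_sum (decMP' μ M r0 h2) hR2]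
  have hptw : ∀ m r, μ.row m r
      = (decMP' μ M r0 h2).row m r + (if m = M ∧ r = r0 then 1 else 0) := by
    intro m r
    show _ = μ.row m r - (if m = M ∧ r = r0 then 1 else 0) + _
    split_ifs with hc
    · obtain ⟨rfl, rfl⟩ := hc; omega
    · omega
  rw [Finset.sum_congr rfl fun m _ => Finset.sum_congr rfl fun r _ => hptw m r]
  rw [Finset.sum_congr rfl fun m (_ : m ∈ Finset.range ℓ) => Finset.sum_add_distrib,
    Finset.sum_add_distrib]
  congr 1
  have hinner : ∀ m, (∑ r ∈ Finset.range (max R (r0 + 1)),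
      (if m = M ∧ r = r0 then (1 : ℕ) else 0)) = if m = M then 1 else 0 := by
    intro m
    by_cases hm : m = M
    · subst hm
      simp only [true_and]
      rw [Finset.sum_ite_eq' (Finset.range (max R (r0 + 1))) r0 (fun _ => (1 : ℕ))]
      simp [hr0R]
    · simp [hm]
  rw [Finset.sum_congr rfl fun m _ => hinner m,
    Finset.sum_ite_eq' (Finset.range ℓ) M (fun _ => (1 : ℕ))]
  simp [hMl]

lemma rows_eq_zero_of_size {ℓ : ℕ} (μ : MultiPartition ℓ) (h0 : size μ = 0) :
    ∀ m r, μ.row m r = 0 := by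
  obtain ⟨R, hR⟩ := exists_bound μ
  rw [size_eq_sum μ hR] at h0
  intro m r
  rcases Nat.lt_or_ge m ℓ with hm | hm
  · rcases Nat.lt_or_ge r R with hr | hr
    · have h1 := Finset.sum_eq_zero_iff.1 h0 m (Finset.mem_range.2 hm)
      exact Finset.sum_eq_zero_iff.1 h1 r (Finset.mem_range.2 hr)
    · exact hR m r hr
  · exact μ.comp_bound m hm r

lemma exists_nonempty_comp {ℓ : ℕ} (μ : MultiPartition ℓ) {n : ℕ} (hs : size μ = n + 1) :
    ∃ m, m < ℓ ∧ 1 ≤ μ.row m 0 := by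
  by_contra hcon
  push_neg at hcon
  have hz : ∀ m r, μ.row m r = 0 := by
    intro m r
    rcases Nat.lt_or_ge m ℓ with hm | hm
    · have h0 : μ.row m 0 = 0 := by have := hcon m hm; omega
      have := row_mono μ m (Nat.zero_le r)
      omega
    · exact μ.comp_bound m hm r
  have : size μ = 0 := by
    rw [size_eq_sum μ (R := 0) (fun m r _ => hz m r)]
    simp [hz]
  omega

/-! ### kappa gap -/

lemma zmod_shift {e : ℕ} (he : 1 ≤ e) (a b : ZMod e) (d : ℕ)
    (hd : a.val + d = b.val ∨ a.val + d = b.val + e) : b = a + (d : ZMod e) := by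
  haveI : NeZero e := ⟨by omega⟩
  have ha : ((a.val : ℕ) : ZMod e) = a := ZMod.natCast_rightInverse a
  have hb : ((b.val : ℕ) : ZMod e) = b := ZMod.natCast_rightInverse b
  rcases hd with hd | hd
  · have : ((a.val + d : ℕ) : ZMod e) = ((b.val : ℕ) : ZMod e) := by rw [hd]
    rw [Nat.cast_add, ha, hb] at this
    exact this.symm
  · have : ((a.val + d : ℕ) : ZMod e) = ((b.val + e : ℕ) : ZMod e) := by rw [hd]
    rw [Nat.cast_add, Nat.cast_add, ha, hb, ZMod.natCast_self, add_zero] at this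
    exact this.symm

lemma kappa_gap (e h ℓ : ℕ) (κ : ℕ → ZMod e) (hh : 1 ≤ h) (hl : 1 ≤ ℓ) (he : h * ℓ < e)
    (hadm : HAdmissible e h ℓ κ) (hnorm : Normalized e h ℓ κ)
    {m t : ℕ} (hmt : m < t) (ht : t < ℓ) :
    (κ m).val + h ≤ (κ t).val ∧ (κ t).val + h + 1 ≤ (κ m).val + e := by
  have he1 : 1 ≤ e := by
    have h1 : 1 ≤ h * ℓ := Nat.one_le_iff_ne_zero.2 (by positivity)
    omega
  haveI : NeZero e := ⟨by omega⟩
  have hmono : ∀ a b, a ≤ b → b < ℓ → (κ a).val ≤ (κ b).val := by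
    intro a b hab hbl
    rcases Nat.eq_or_lt_of_le hab with rfl | hab'
    · exact le_rfl
    · exact le_of_lt (hnorm.1 a b hab' hbl)
  have hlow : ∀ a b, a < b → b < ℓ → (κ a).val + h ≤ (κ b).val := by
    intro a b hab hbl
    by_contra hcon
    push_neg at hcon
    have hv : (κ a).val < (κ b).val := hnorm.1 a b hab hbl
    have hb : κ b = κ a + (((κ b).val - (κ a).val : ℕ) : ZMod e) :=
      zmod_shift he1 _ _ _ (Or.inl (by omega))
    have := hadm (κ a) a b (by omega) hbl ⟨0, by omega, by simp⟩
      ⟨(κ b).val - (κ a).val, by omega, hb⟩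
    omega
  have hl2 : 2 ≤ ℓ := by omega
  have hwrap : (κ (ℓ - 1)).val + h ≤ (κ 0).val + e := by
    by_contra hcon
    push_neg at hcon
    have hvb : (κ (ℓ - 1)).val < e := ZMod.val_lt _
    have hva : (κ 0).val < e := ZMod.val_lt _
    have hb : κ 0 = κ (ℓ - 1) + (((κ 0).val + e - (κ (ℓ - 1)).val : ℕ) : ZMod e) :=
      zmod_shift he1 _ _ _ (Or.inr (by omega))
    have h0l : (κ 0).val ≤ (κ (ℓ - 1)).val := hmono 0 (ℓ - 1) (by omega) (by omega)
    have := hadm (κ (ℓ - 1)) (ℓ - 1) 0 (by omega) (by omega) ⟨0, by omega, by simp⟩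
      ⟨(κ 0).val + e - (κ (ℓ - 1)).val, by omega, hb⟩
    omega
  refine ⟨hlow m t hmt ht, ?_⟩
  have h1 : (κ t).val ≤ (κ (ℓ - 1)).val := hmono t (ℓ - 1) (by omega) (by omega)
  have h2 : (κ 0).val ≤ (κ m).val := hmono 0 m (by omega) (by omega)
  rcases Nat.lt_or_ge ((κ t).val + h) ((κ m).val + e) with hcase | hcase
  · omega
  · exfalso
    have heq : (κ t).val + h = (κ m).val + e := by omega
    have hm0 : m = 0 := by
      by_contra hm0
      have := hlow 0 m (by omega) (by omega)
      omega
    have htl : t = ℓ - 1 := by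
      by_contra htl
      have := hlow t (ℓ - 1) (by omega) (by omega)
      omega
    subst hm0; subst htl
    have hfin : κ 0 = κ (ℓ - 1) + (h : ZMod e) := by
      apply zmod_shift he1
      right
      omega
    exact hnorm.2 hfin.symm
/-! ### dval vanishing -/

lemma dval_eq_zero (e h : ℕ) (κ : ℕ → ZMod e) (x y : ℕ → ℝ) (i j s : ℕ) (r : ℤ)
    (he : 1 ≤ e) (hij : i ≠ j) (A P B : ℤ)
    (hA : pairV e h κ x i j = (A : ℝ))
    (hP : pairV e h κ (fun _ => 0) i j = (P : ℝ))
    (hP1 : 1 ≤ P) (hP2 : P + 1 ≤ (e : ℤ))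
    (hy : pairV e h κ y i j = (B : ℝ))
    (hB : B = A + (if s = i then 1 else 0) - (if s = j then 1 else 0))
    (hA1 : s = i → 1 ≤ A) (hA2 : s = j → A + 1 ≤ (e : ℤ)) :
    dval e h κ x y i j r = 0 := by
  have hepos : (0 : ℤ) < (e : ℤ) := by exact_mod_cast he
  have key1 : 1 ≤ r * (e : ℤ) → (e : ℤ) ≤ r * (e : ℤ) := by
    intro h1
    have hr : 1 ≤ r := by
      by_contra hr
      push_neg at hr
      have hr' : r ≤ 0 := by omega
      have : r * (e : ℤ) ≤ 0 := mul_nonpos_of_nonpos_of_nonneg hr' (by omega)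
      linarith
    exact le_mul_of_one_le_left (by omega) hr
  have key2 : r * (e : ℤ) + 1 ≤ (e : ℤ) → r * (e : ℤ) ≤ 0 := by
    intro h1
    by_contra hc
    push_neg at hc
    have := key1 (by linarith)
    linarith
  have hC1 : ¬ (OnWall e h κ x i j r ∧ InLt e h κ y i j r) := by
    rintro ⟨h1, h2⟩
    unfold OnWall at h1
    unfold InLt at h2
    rw [hA] at h1
    rw [hy, hP] at h2
    have h1' : A = r * (e : ℤ) := by exact_mod_cast h1
    have h2' : (0 : ℤ) < (B - r * (e : ℤ)) * (P - r * (e : ℤ)) := by exact_mod_cast h2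
    by_cases hsi : s = i
    · have hsj : ¬ s = j := fun hsj => hij (hsi ▸ hsj)
      rw [if_pos hsi, if_neg hsj] at hB
      have heq1 : B - r * (e : ℤ) = 1 := by omega
      rw [heq1, one_mul] at h2'
      have := key2 (by linarith)
      have := hA1 hsi
      omega
    · by_cases hsj : s = j
      · rw [if_neg hsi, if_pos hsj] at hB
        have heq1 : B - r * (e : ℤ) = -1 := by omega
        rw [heq1, neg_one_mul] at h2'
        have h3 : P < r * (e : ℤ) := by linarith
        have := key1 (by linarith)
        have := hA2 hsj
        omega
      · rw [if_neg hsi, if_neg hsj] at hB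
        have heq1 : B - r * (e : ℤ) = 0 := by omega
        rw [heq1, zero_mul] at h2'
        exact lt_irrefl _ h2'
  have hC2 : ¬ (InGt e h κ x i j r ∧ OnWall e h κ y i j r) := by
    rintro ⟨h1, h2⟩
    unfold InGt at h1
    unfold OnWall at h2
    rw [hA, hP] at h1
    rw [hy] at h2
    have h1' : (A - r * (e : ℤ)) * (P - r * (e : ℤ)) < 0 := by exact_mod_cast h1
    have h2' : B = r * (e : ℤ) := by exact_mod_cast h2
    by_cases hsi : s = i
    · have hsj : ¬ s = j := fun hsj => hij (hsi ▸ hsj)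
      rw [if_pos hsi, if_neg hsj] at hB
      have heq1 : A - r * (e : ℤ) = -1 := by omega
      rw [heq1, neg_one_mul] at h1'
      have h3 : (0 : ℤ) < P - r * (e : ℤ) := by linarith
      have := key2 (by linarith)
      have := hA1 hsi
      omega
    · by_cases hsj : s = j
      · rw [if_neg hsi, if_pos hsj] at hB
        have heq1 : A - r * (e : ℤ) = 1 := by omega
        rw [heq1, one_mul] at h1'
        have := key1 (by linarith)
        have := hA2 hsj
        omega
      · rw [if_neg hsi, if_neg hsj] at hB
        have heq1 : A - r * (e : ℤ) = 0 := by omega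
        rw [heq1, zero_mul] at h1'
        exact lt_irrefl _ h1'
  unfold dval
  rw [if_neg hC1, if_neg hC2]

/-! ### pts and ptD lemmas -/

lemma pts_succ (s : ℕ → ℕ) (k a : ℕ) :
    pts s (k + 1) a = pts s k a + (if s k = a then 1 else 0) := by
  unfold pts
  rw [Finset.range_add_one, Finset.filter_insert]
  split_ifs with hk
  · rw [Finset.card_insert_of_notMem (by simp)]
    push_cast
    ring
  · rw [add_zero]

lemma pts_congr {s t : ℕ → ℕ} (k : ℕ) (hst : ∀ l, l < k → s l = t l) :
    pts s k = pts t k := by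
  funext a
  unfold pts
  congr 2
  apply Finset.filter_congr
  intro l hl
  rw [hst l (Finset.mem_range.1 hl)]

lemma ptD_eq_colLen {ℓ : ℕ} (h : ℕ) (ν : MultiPartition ℓ) (a : ℕ) :
    ptD h (diag ν) a = (colLen ν (a / h) (a % h + 1) : ℝ) := by
  unfold ptD
  rw [colLen_eq_ncard]
  congr 2
  ext r
  simp only [diag, Set.mem_setOf_eq, Nat.add_sub_cancel, colSet]
  constructor
  · rintro ⟨-, -, hle⟩; exact hle
  · intro hle; exact ⟨by omega, by omega, hle⟩

lemma rhoZ_decode (e h : ℕ) (κ : ℕ → ZMod e) (hh : 0 < h) (m i : ℕ) (hi : i < h) :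
    rhoZ e h κ (h * m + i) = (e : ℤ) - ((κ m).val : ℤ) - (i : ℤ) := by
  have h0 : (h * m + i) / h = m := by
    have h1 := Nat.mul_add_div hh m i
    have h2 : i / h = 0 := Nat.div_eq_of_lt hi
    omega
  have h3 : (h * m + i) % h = i := by
    have h4 := Nat.mul_add_mod h m i
    have h5 : i % h = i := Nat.mod_eq_of_lt hi
    omega
  show (e : ℤ) - ((κ ((h * m + i) / h)).val : ℤ) - (((h * m + i) % h : ℕ) : ℤ) = _
  rw [h0, h3]

lemma pdiag_comm (ℓ : ℕ) (D : Set Node) (j : ℕ) :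
    PDiag ℓ D (j + 1) = PDiag ℓ (PDiag ℓ D 1) j := by
  induction j with
  | zero => rfl
  | succ k ihk =>
    have h1 : PDiag ℓ D (k + 1 + 1)
        = PDiag ℓ D (k + 1) \ {leastRem ℓ (PDiag ℓ D (k + 1))} := rfl
    have h2 : PDiag ℓ (PDiag ℓ D 1) (k + 1)
        = PDiag ℓ (PDiag ℓ D 1) k \ {leastRem ℓ (PDiag ℓ (PDiag ℓ D 1) k)} := rfl
    rw [h1, h2, ihk]

lemma nodeDom_asymm {ℓ : ℕ} {a b : Node} (h1 : NodeDom ℓ a b) (h2 : NodeDom ℓ b a) :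
    False := by
  unfold NodeDom at h1 h2
  omega

lemma leastRem_eq {ℓ : ℕ} {D : Set Node} {X : Node} (hX : IsLeastRem ℓ D X) :
    leastRem ℓ D = X := by
  have hZ : IsLeastRem ℓ D (leastRem ℓ D) := Classical.epsilon_spec ⟨X, hX⟩
  by_contra hne
  exact nodeDom_asymm (hX.2 _ hZ.1 hne) (hZ.2 _ hX.1 (Ne.symm hne))
/-! ### the least dominant removable node -/

lemma isLeast_X {h ℓ : ℕ} (μ : MultiPartition ℓ) (hμc : HCols h μ)
    (M : ℕ) (hMl : M < ℓ) (hK : 1 ≤ colLen μ M 1)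
    (hmax : ∀ t, t < ℓ → t ≠ M → 1 ≤ colLen μ t 1 →
      ((t : ℤ) + 1) + (ℓ : ℤ) * ((colLen μ t 1 : ℤ) - (μ.row t (colLen μ t 1 - 1) : ℤ)) <
      ((M : ℤ) + 1) + (ℓ : ℤ) * ((colLen μ M 1 : ℤ) - (μ.row M (colLen μ M 1 - 1) : ℤ))) :
    IsLeastRem ℓ (diag μ) (colLen μ M 1, μ.row M (colLen μ M 1 - 1), M) := by
  have hcX1 : 1 ≤ μ.row M (colLen μ M 1 - 1) :=
    (mem_colSet_iff μ M le_rfl (colLen μ M 1 - 1)).2 (by omega)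
  have hrowK : μ.row M (colLen μ M 1) = 0 := by
    by_contra hc
    have := (mem_colSet_iff μ M le_rfl (colLen μ M 1)).1 (by omega)
    omega
  have h2 : μ.row M ((colLen μ M 1 - 1) + 1) < μ.row M (colLen μ M 1 - 1) := by
    rw [show (colLen μ M 1 - 1) + 1 = colLen μ M 1 from by omega]
    omega
  constructor
  · constructor
    · show 1 ≤ colLen μ M 1 ∧ 1 ≤ μ.row M (colLen μ M 1 - 1) ∧
        μ.row M (colLen μ M 1 - 1) ≤ μ.row M (colLen μ M 1 - 1)
      exact ⟨hK, hcX1, le_rfl⟩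
    · refine ⟨decMP' μ M (colLen μ M 1 - 1) h2, ?_⟩
      rw [diag_decMP', show (colLen μ M 1 - 1) + 1 = colLen μ M 1 from by omega]
  · rintro ⟨r, c, m⟩ hrem hne
    obtain ⟨hmem, ν, hν⟩ := hrem
    have hr : 1 ≤ r := hmem.1
    have hc : 1 ≤ c := hmem.2.1
    have hle : c ≤ μ.row m (r - 1) := hmem.2.2
    have hml : m < ℓ := by
      by_contra hm
      have := μ.comp_bound m (by omega) (r - 1)
      omega
    have hceq : c = μ.row m (r - 1) := by
      by_contra hne'
      have hlt : c < μ.row m (r - 1) := lt_of_le_of_ne hle hne'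
      have h1 : ((r, c + 1, m) : Node) ∈ diag ν := by
        rw [hν]
        refine ⟨show 1 ≤ r ∧ 1 ≤ c + 1 ∧ c + 1 ≤ μ.row m (r - 1) from
          ⟨hr, by omega, by omega⟩, ?_⟩
        intro hmem'
        rw [Set.mem_singleton_iff] at hmem'
        have hcc : c + 1 = c := congrArg (fun b : Node => b.2.1) hmem'
        omega
      have h1' : c + 1 ≤ ν.row m (r - 1) := h1.2.2
      have h2' : ((r, c, m) : Node) ∈ diag ν :=
        show 1 ≤ r ∧ 1 ≤ c ∧ c ≤ ν.row m (r - 1) from ⟨hr, hc, by omega⟩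
      rw [hν] at h2'
      exact h2'.2 rfl
    have hrowr : μ.row m r < c := by
      by_contra hge
      push_neg at hge
      have h1 : ((r + 1, c, m) : Node) ∈ diag ν := by
        rw [hν]
        refine ⟨show 1 ≤ r + 1 ∧ 1 ≤ c ∧ c ≤ μ.row m (r + 1 - 1) from ?_, ?_⟩
        · refine ⟨by omega, hc, ?_⟩
          rw [show r + 1 - 1 = r from by omega]
          exact hge
        · intro hmem'
          rw [Set.mem_singleton_iff] at hmem'
          have hrr : r + 1 = r := congrArg (fun b : Node => b.1) hmem'
          omega
      have h1' : c ≤ ν.row m (r + 1 - 1) := h1.2.2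
      have hmono := row_mono ν m (show r - 1 ≤ r + 1 - 1 from by omega)
      have h2' : ((r, c, m) : Node) ∈ diag ν :=
        show 1 ≤ r ∧ 1 ≤ c ∧ c ≤ ν.row m (r - 1) from ⟨hr, hc, by omega⟩
      rw [hν] at h2'
      exact h2'.2 rfl
    have hrK' : r ≤ colLen μ m 1 := by
      have := (mem_colSet_iff μ m le_rfl (r - 1)).1 (by omega)
      omega
    by_cases hmM : m = M
    · subst hmM
      by_cases hrKeq : r = colLen μ m 1
      · exfalso
        apply hne
        subst hrKeq
        rw [hceq]
      · have hrlt : r ≤ colLen μ m 1 - 1 := by omega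
        left
        show ((m : ℤ) + 1) + (ℓ : ℤ) * ((r : ℤ) - (c : ℤ))
          < ((m : ℤ) + 1) + (ℓ : ℤ) * ((colLen μ m 1 : ℤ) - (μ.row m (colLen μ m 1 - 1) : ℤ))
        have hcge : μ.row m (colLen μ m 1 - 1) ≤ c := by
          rw [hceq]
          exact row_mono μ m (by omega)
        have hstep : (r : ℤ) - (c : ℤ)
            < (colLen μ m 1 : ℤ) - (μ.row m (colLen μ m 1 - 1) : ℤ) := by omega
        have hl0 : (0 : ℤ) < (ℓ : ℤ) := by exact_mod_cast (show 0 < ℓ by omega)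
        have hmul := mul_lt_mul_of_pos_left hstep hl0
        linarith
    · have hKm : 1 ≤ colLen μ m 1 := by omega
      have hp := hmax m hml hmM hKm
      left
      show ((m : ℤ) + 1) + (ℓ : ℤ) * ((r : ℤ) - (c : ℤ))
        < ((M : ℤ) + 1) + (ℓ : ℤ) * ((colLen μ M 1 : ℤ) - (μ.row M (colLen μ M 1 - 1) : ℤ))
      have hcm : μ.row m (colLen μ m 1 - 1) ≤ c := by
        rw [hceq]
        exact row_mono μ m (by omega)
      have hrle : (r : ℤ) - (c : ℤ)
          ≤ (colLen μ m 1 : ℤ) - (μ.row m (colLen μ m 1 - 1) : ℤ) := by omega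
      have hl0 : (0 : ℤ) ≤ (ℓ : ℤ) := by positivity
      have hmul := mul_le_mul_of_nonneg_left hrle hl0
      linarith
/-! ### vanishing of dval along the distinguished step -/

lemma step_H (e h ℓ : ℕ) (κ : ℕ → ZMod e) (hh : 1 ≤ h) (hl : 1 ≤ ℓ) (he : h * ℓ < e)
    (hadm : HAdmissible e h ℓ κ) (hnorm : Normalized e h ℓ κ)
    (μ' : MultiPartition ℓ) (hμ'c : HCols h μ')
    (M K cX s : ℕ) (hMl : M < ℓ) (hK : 1 ≤ K) (hcX1 : 1 ≤ cX) (hcXh : cX ≤ h)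
    (hlastK : colLen μ' M cX = K - 1)
    (hM1 : colLen μ' M 1 ≤ K)
    (hmax : ∀ t, t < ℓ → t ≠ M → 1 ≤ colLen μ' t 1 →
      ((t : ℤ) + 1) + (ℓ : ℤ) * ((colLen μ' t 1 : ℤ) - (μ'.row t (colLen μ' t 1 - 1) : ℤ)) <
      ((M : ℤ) + 1) + (ℓ : ℤ) * ((K : ℤ) - (cX : ℤ)))
    (hseq : s = h * M + (cX - 1))
    (x y : ℕ → ℝ)
    (hx : ∀ a, x a = (colLen μ' (a / h) (a % h + 1) : ℝ))
    (hy : ∀ a, y a = x a + (if s = a then 1 else 0))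
    (i j : ℕ) (hij : i < j) (hjl : j < h * ℓ) (r : ℤ) :
    dval e h κ x y i j r = 0 := by
  have hhl : h ≤ h * ℓ := Nat.le_mul_of_pos_right h (by omega)
  have heh : h + 1 ≤ e := by omega
  have he1 : 1 ≤ e := by omega
  have hil : i < h * ℓ := lt_trans hij hjl
  obtain ⟨mi, hmi⟩ : ∃ q, i / h = q := ⟨_, rfl⟩
  obtain ⟨i0, hi0e⟩ : ∃ q, i % h = q := ⟨_, rfl⟩
  obtain ⟨mj, hmj⟩ : ∃ q, j / h = q := ⟨_, rfl⟩
  obtain ⟨j0, hj0e⟩ : ∃ q, j % h = q := ⟨_, rfl⟩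
  have hi0 : i0 < h := by rw [← hi0e]; exact Nat.mod_lt _ (by omega)
  have hj0 : j0 < h := by rw [← hj0e]; exact Nat.mod_lt _ (by omega)
  have hieq : h * mi + i0 = i := by rw [← hmi, ← hi0e]; exact Nat.div_add_mod i h
  have hjeq : h * mj + j0 = j := by rw [← hmj, ← hj0e]; exact Nat.div_add_mod j h
  have hmil : mi < ℓ := by rw [← hmi]; exact Nat.div_lt_of_lt_mul hil
  have hmjl : mj < ℓ := by rw [← hmj]; exact Nat.div_lt_of_lt_mul hjl
  have hmm : mi ≤ mj := by
    rw [← hmi, ← hmj]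
    exact Nat.div_le_div_right (le_of_lt hij)
  have hsdiv : s / h = M := by
    have h0 : (cX - 1) / h = 0 := Nat.div_eq_of_lt (by omega)
    have h1 := Nat.mul_add_div (show 0 < h by omega) M (cX - 1)
    rw [hseq]
    omega
  have hsmod : s % h = cX - 1 := by
    have h0 := Nat.mul_add_mod h M (cX - 1)
    have h1 : (cX - 1) % h = cX - 1 := Nat.mod_eq_of_lt (by omega)
    rw [hseq]
    omega
  have hxi : x i = (colLen μ' mi (i0 + 1) : ℝ) := by rw [hx i, hmi, hi0e]
  have hxj : x j = (colLen μ' mj (j0 + 1) : ℝ) := by rw [hx j, hmj, hj0e]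
  have hrhoi : rhoZ e h κ i = (e : ℤ) - ((κ mi).val : ℤ) - (i0 : ℤ) := by
    show (e : ℤ) - ((κ (i / h)).val : ℤ) - ((i % h : ℕ) : ℤ) = _
    rw [hmi, hi0e]
  have hrhoj : rhoZ e h κ j = (e : ℤ) - ((κ mj).val : ℤ) - (j0 : ℤ) := by
    show (e : ℤ) - ((κ (j / h)).val : ℤ) - ((j % h : ℕ) : ℤ) = _
    rw [hmj, hj0e]
  have hP12 : (1 : ℤ) ≤ ((((κ mj).val : ℤ) + (j0 : ℤ)) - (((κ mi).val : ℤ) + (i0 : ℤ)))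
      ∧ ((((κ mj).val : ℤ) + (j0 : ℤ)) - (((κ mi).val : ℤ) + (i0 : ℤ))) + 1 ≤ (e : ℤ) := by
    rcases Nat.lt_or_ge mi mj with hlt | hge
    · have hkg := kappa_gap e h ℓ κ hh hl he hadm hnorm hlt hmjl
      omega
    · have heqm : mj = mi := by omega
      subst heqm
      have hi0j0 : i0 < j0 := by omega
      omega
  refine dval_eq_zero e h κ x y i j s r he1 (by omega)
    (((colLen μ' mi (i0 + 1) : ℤ) - (colLen μ' mj (j0 + 1) : ℤ))
      + ((((κ mj).val : ℤ) + (j0 : ℤ)) - (((κ mi).val : ℤ) + (i0 : ℤ))))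
    ((((κ mj).val : ℤ) + (j0 : ℤ)) - (((κ mi).val : ℤ) + (i0 : ℤ)))
    _ ?_ ?_ hP12.1 hP12.2 ?_ rfl ?_ ?_
  · unfold pairV
    rw [hxi, hxj, hrhoi, hrhoj]
    push_cast
    ring
  · unfold pairV
    rw [hrhoi, hrhoj]
    push_cast
    ring
  · unfold pairV
    rw [hy i, hy j, hxi, hxj, hrhoi, hrhoj]
    split_ifs <;> (push_cast; ring)
  · -- s = i → 1 ≤ A
    intro hsi
    have hmie : mi = M := by rw [← hmi, ← hsi]; exact hsdiv
    have hi0c : i0 = cX - 1 := by rw [← hi0e, ← hsi]; exact hsmod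
    rw [hmie, hi0c] at hieq ⊢
    rw [hmie] at hmm
    have hci : colLen μ' M (cX - 1 + 1) = K - 1 := by
      rw [show cX - 1 + 1 = cX from by omega]
      exact hlastK
    rcases Nat.lt_or_ge M mj with hlt | hge
    · have hne : mj ≠ M := by omega
      have hkg := kappa_gap e h ℓ κ hh hl he hadm hnorm hlt hmjl
      have hcj_le : colLen μ' mj (j0 + 1) ≤ colLen μ' mj 1 :=
        colLen_anti μ' mj le_rfl (by omega)
      rcases Nat.eq_zero_or_pos (colLen μ' mj 1) with hKt | hKt
      · omega
      · have hct1 : 1 ≤ μ'.row mj (colLen μ' mj 1 - 1) :=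
          (mem_colSet_iff μ' mj le_rfl _).2 (by omega)
        have hcth : μ'.row mj (colLen μ' mj 1 - 1) ≤ h := hμ'c _ _
        have hpos := hmax mj hmjl hne hKt
        have hll : (0 : ℤ) < (ℓ : ℤ) := by exact_mod_cast hl
        have hMj' : ((M : ℤ) + 1) ≤ (mj : ℤ) := by exact_mod_cast hlt
        have hmul : (ℓ : ℤ) * ((colLen μ' mj 1 : ℤ) - (μ'.row mj (colLen μ' mj 1 - 1) : ℤ))
            < (ℓ : ℤ) * ((K : ℤ) - (cX : ℤ)) := by linarith
        have hKtle := lt_of_mul_lt_mul_left hmul (by positivity)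
        omega
    · have hmjM : mj = M := by omega
      rw [hmjM] at hjeq ⊢
      have hi0j0 : cX - 1 < j0 := by omega
      have hanti : colLen μ' M (j0 + 1) ≤ colLen μ' M cX :=
        colLen_anti μ' M (by omega) (by omega)
      omega
  · -- s = j → A + 1 ≤ e
    intro hsj
    have hmje : mj = M := by rw [← hmj, ← hsj]; exact hsdiv
    have hj0c : j0 = cX - 1 := by rw [← hj0e, ← hsj]; exact hsmod
    rw [hmje, hj0c] at hjeq ⊢
    rw [hmje] at hmm
    have hcj : colLen μ' M (cX - 1 + 1) = K - 1 := by
      rw [show cX - 1 + 1 = cX from by omega]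
      exact hlastK
    rcases Nat.lt_or_ge mi M with hlt | hge
    · have hne : mi ≠ M := by omega
      have hkg := kappa_gap e h ℓ κ hh hl he hadm hnorm hlt hMl
      have hci_le : colLen μ' mi (i0 + 1) ≤ colLen μ' mi 1 :=
        colLen_anti μ' mi le_rfl (by omega)
      rcases Nat.eq_zero_or_pos (colLen μ' mi 1) with hKm | hKm
      · omega
      · have hcm1 : 1 ≤ μ'.row mi (colLen μ' mi 1 - 1) :=
          (mem_colSet_iff μ' mi le_rfl _).2 (by omega)
        have hcmh : μ'.row mi (colLen μ' mi 1 - 1) ≤ h := hμ'c _ _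
        have hpos := hmax mi hmil hne hKm
        have hll : (0 : ℤ) < (ℓ : ℤ) := by exact_mod_cast hl
        have hMl' : ((M : ℤ) + 1) ≤ (ℓ : ℤ) + (mi : ℤ) := by
          exact_mod_cast (show M + 1 ≤ ℓ + mi by omega)
        have hexp : (ℓ : ℤ) * (((K : ℤ) - (cX : ℤ)) + 1)
            = (ℓ : ℤ) * ((K : ℤ) - (cX : ℤ)) + (ℓ : ℤ) := by ring
        have hmul : (ℓ : ℤ) * ((colLen μ' mi 1 : ℤ) - (μ'.row mi (colLen μ' mi 1 - 1) : ℤ))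
            < (ℓ : ℤ) * (((K : ℤ) - (cX : ℤ)) + 1) := by
          rw [hexp]
          linarith
        have hKmle := lt_of_mul_lt_mul_left hmul (by positivity)
        omega
    · have hmie : mi = M := by omega
      rw [hmie] at hieq ⊢
      have hanti : colLen μ' M (i0 + 1) ≤ colLen μ' M 1 :=
        colLen_anti μ' M le_rfl (by omega)
      omega

theorem statement_12 (h ℓ e n : ℕ) (κ : ℕ → ZMod e)
    (hh : 1 ≤ h) (hl : 1 ≤ ℓ) (he : h * ℓ < e)
    (hadm : HAdmissible e h ℓ κ) (hnorm : Normalized e h ℓ κ)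
    (μ : MultiPartition ℓ) (hμ : size μ = n) (hμc : HCols h μ) :
    IsPath (h * ℓ) n (tPath h ℓ n μ) ∧
    (∀ k, k ≤ n → pts (tPath h ℓ n μ) k = ptD h (PDiag ℓ (diag μ) (n - k))) ∧
    DominantPath e h ℓ n κ (tPath h ℓ n μ) ∧
    pathDeg e h ℓ κ n (tPath h ℓ n μ) = 0 := by
  classical
  have hPD0 : ∀ (D : Set Node), PDiag ℓ D 0 = D := fun _ => rfl
  induction n generalizing μ with
  | zero =>
    have hrows : ∀ m r, μ.row m r = 0 := rows_eq_zero_of_size μ hμ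
    have hdiag : diag μ = ∅ := by
      ext b
      obtain ⟨r, c, m⟩ := b
      simp only [diag, Set.mem_setOf_eq, hrows, Set.mem_empty_iff_false, iff_false]
      rintro ⟨h1, h2, h3⟩
      omega
    refine ⟨⟨fun k hk => absurd hk (Nat.not_lt_zero k), fun k _ => by simp [tPath]⟩,
      ?_, ?_, ?_⟩
    · intro k hk
      have hk0 : k = 0 := by omega
      subst hk0
      funext a
      rw [show (0 : ℕ) - 0 = 0 from rfl, hPD0, hdiag]
      simp [pts, ptD]
    · intro k hk m i j hm hij hjh
      have hk0 : k = 0 := by omega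
      subst hk0
      have hzero : ∀ a, pts (tPath h ℓ 0 μ) 0 a = 0 := by intro a; simp [pts]
      unfold pairV
      rw [hzero, hzero]
      have hZ : rhoZ e h κ (h * m + j) < rhoZ e h κ (h * m + i) := by
        rw [rhoZ_decode e h κ (by omega) m i (by omega),
          rhoZ_decode e h κ (by omega) m j (by omega)]
        omega
      have hZ' : ((rhoZ e h κ (h * m + j) : ℤ) : ℝ)
          < ((rhoZ e h κ (h * m + i) : ℤ) : ℝ) := by exact_mod_cast hZ
      linarith
    · simp [pathDeg]
  | succ n ih =>
    obtain ⟨m0, hm0l, hm0⟩ := exists_nonempty_comp μ hμ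
    have hm0K : 1 ≤ colLen μ m0 1 := by
      have := (mem_colSet_iff μ m0 le_rfl 0).1 hm0
      omega
    have hdist : ∀ (a b : ℕ), a < ℓ → b < ℓ → ∀ za zb : ℤ,
        ((a : ℤ) + 1) + (ℓ : ℤ) * za = ((b : ℤ) + 1) + (ℓ : ℤ) * zb → a = b := by
      intro a b ha hb za zb hab
      have hexp : (ℓ : ℤ) * (za - zb) = (ℓ : ℤ) * za - (ℓ : ℤ) * zb := by ring
      have h1 : (b : ℤ) - (a : ℤ) = (ℓ : ℤ) * (za - zb) := by rw [hexp]; linarith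
      have ha' : (a : ℤ) < (ℓ : ℤ) := by exact_mod_cast ha
      have hb' : (b : ℤ) < (ℓ : ℤ) := by exact_mod_cast hb
      have ha0 : (0 : ℤ) ≤ (a : ℤ) := by positivity
      have hb0 : (0 : ℤ) ≤ (b : ℤ) := by positivity
      rcases lt_trichotomy (za - zb) 0 with hk | hk | hk
      · exfalso
        have h2 : (ℓ : ℤ) * (za - zb) ≤ (ℓ : ℤ) * (-1) :=
          mul_le_mul_of_nonneg_left (by omega) (by positivity)
        have h3 : (ℓ : ℤ) * (-1) = -(ℓ : ℤ) := by ring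
        rw [h3] at h2
        linarith
      · rw [hk, mul_zero] at h1
        exact_mod_cast (show (a : ℤ) = (b : ℤ) by linarith)
      · exfalso
        have h2 : (ℓ : ℤ) * 1 ≤ (ℓ : ℤ) * (za - zb) :=
          mul_le_mul_of_nonneg_left (by omega) (by positivity)
        rw [mul_one] at h2
        linarith
    obtain ⟨M, hMS, hMmax⟩ := Finset.exists_max_image
      ((Finset.range ℓ).filter (fun t => 1 ≤ colLen μ t 1))
      (fun t => ((t : ℤ) + 1) + (ℓ : ℤ) * ((colLen μ t 1 : ℤ) - (μ.row t (colLen μ t 1 - 1) : ℤ)))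
      ⟨m0, by simp only [Finset.mem_filter, Finset.mem_range]; exact ⟨hm0l, hm0K⟩⟩
    simp only [Finset.mem_filter, Finset.mem_range] at hMS
    have hMl : M < ℓ := hMS.1
    have hK : 1 ≤ colLen μ M 1 := hMS.2
    have hmax' : ∀ t, t < ℓ → t ≠ M → 1 ≤ colLen μ t 1 →
        ((t : ℤ) + 1) + (ℓ : ℤ) * ((colLen μ t 1 : ℤ) - (μ.row t (colLen μ t 1 - 1) : ℤ)) <
        ((M : ℤ) + 1) + (ℓ : ℤ) * ((colLen μ M 1 : ℤ) - (μ.row M (colLen μ M 1 - 1) : ℤ)) := by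
      intro t h1 h2' h3
      have hle := hMmax t (by simp only [Finset.mem_filter, Finset.mem_range]; exact ⟨h1, h3⟩)
      rcases lt_or_eq_of_le hle with hlt | heq
      · exact hlt
      · exact absurd (hdist t M h1 hMl _ _ heq) h2'
    have hcX1 : 1 ≤ μ.row M (colLen μ M 1 - 1) :=
      (mem_colSet_iff μ M le_rfl _).2 (by omega)
    have hrowK : μ.row M (colLen μ M 1) = 0 := by
      by_contra hcon
      have := (mem_colSet_iff μ M le_rfl (colLen μ M 1)).1 (by omega)
      omega
    have h2 : μ.row M ((colLen μ M 1 - 1) + 1) < μ.row M (colLen μ M 1 - 1) := by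
      rw [show (colLen μ M 1 - 1) + 1 = colLen μ M 1 from by omega]
      omega
    have hcXh : μ.row M (colLen μ M 1 - 1) ≤ h := hμc M _
    have hleast : IsLeastRem ℓ (diag μ)
        (colLen μ M 1, μ.row M (colLen μ M 1 - 1), M) := isLeast_X μ hμc M hMl hK hmax'
    have hLR : leastRem ℓ (diag μ) = (colLen μ M 1, μ.row M (colLen μ M 1 - 1), M) :=
      leastRem_eq hleast
    have hdiag' : diag (decMP' μ M (colLen μ M 1 - 1) h2)
        = diag μ \ {((colLen μ M 1 : ℕ), μ.row M (colLen μ M 1 - 1), M)} := by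
      rw [diag_decMP', show (colLen μ M 1 - 1) + 1 = colLen μ M 1 from by omega]
    have hsize' : size (decMP' μ M (colLen μ M 1 - 1) h2) = n := by
      have := size_decMP μ M (colLen μ M 1 - 1) h2
      omega
    have hcols' : HCols h (decMP' μ M (colLen μ M 1 - 1) h2) :=
      hcols_decMP μ hμc M _ h2
    have hPD1 : PDiag ℓ (diag μ) 1 = diag (decMP' μ M (colLen μ M 1 - 1) h2) := by
      show PDiag ℓ (diag μ) 0 \ {leastRem ℓ (PDiag ℓ (diag μ) 0)} = _
      rw [hPD0, hLR, hdiag']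
    have hPDc : ∀ k, PDiag ℓ (diag μ) (k + 1)
        = PDiag ℓ (diag (decMP' μ M (colLen μ M 1 - 1) h2)) k := by
      intro k
      rw [pdiag_comm, hPD1]
    obtain ⟨IH1, IH2, IH3, IH4⟩ := ih (decMP' μ M (colLen μ M 1 - 1) h2) hsize' hcols'
    have htp : ∀ k, k < n → tPath h ℓ (n + 1) μ k
        = tPath h ℓ n (decMP' μ M (colLen μ M 1 - 1) h2) k := by
      intro k hk
      unfold tPath
      rw [if_pos (by omega), if_pos hk,
        show n + 1 - 1 - k = (n - 1 - k) + 1 from by omega, hPDc]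
    have hs : tPath h ℓ (n + 1) μ n
        = h * M + (μ.row M (colLen μ M 1 - 1) - 1) := by
      unfold tPath
      rw [if_pos (by omega), show n + 1 - 1 - n = 0 from by omega, hPD0, hLR]
    have hagree : ∀ k, k ≤ n → pts (tPath h ℓ (n + 1) μ) k
        = pts (tPath h ℓ n (decMP' μ M (colLen μ M 1 - 1) h2)) k :=
      fun k hk => pts_congr k (fun l hl => htp l (by omega))
    have hptsn : pts (tPath h ℓ (n + 1) μ) n
        = ptD h (diag (decMP' μ M (colLen μ M 1 - 1) h2)) := by
      rw [hagree n le_rfl, IH2 n le_rfl, show n - n = 0 from by omega, hPD0]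
    have hpts : ∀ k, k ≤ n + 1 → pts (tPath h ℓ (n + 1) μ) k
        = ptD h (PDiag ℓ (diag μ) (n + 1 - k)) := by
      intro k hk
      rcases Nat.lt_or_ge k (n + 1) with hk' | hk'
      · have hk'' : k ≤ n := by omega
        rw [hagree k hk'', IH2 k hk'',
          show n + 1 - k = (n - k) + 1 from by omega, hPDc]
      · have hkeq : k = n + 1 := by omega
        subst hkeq
        rw [show n + 1 - (n + 1) = 0 from by omega, hPD0]
        funext a
        rw [pts_succ,
          show pts (tPath h ℓ (n + 1) μ) n a
            = ptD h (diag (decMP' μ M (colLen μ M 1 - 1) h2)) a from by rw [hptsn], hs,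
          ptD_eq_colLen h (decMP' μ M (colLen μ M 1 - 1) h2) a, ptD_eq_colLen h μ a]
        by_cases hcase : h * M + (μ.row M (colLen μ M 1 - 1) - 1) = a
        · rw [if_pos hcase]
          have hdiv : a / h = M := by
            have h0 : (μ.row M (colLen μ M 1 - 1) - 1) / h = 0 := Nat.div_eq_of_lt (by omega)
            have h1 := Nat.mul_add_div (show 0 < h by omega) M (μ.row M (colLen μ M 1 - 1) - 1)
            rw [← hcase]
            omega
          have hmod : a % h = μ.row M (colLen μ M 1 - 1) - 1 := by
            have h0 := Nat.mul_add_mod h M (μ.row M (colLen μ M 1 - 1) - 1)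
            have h1 : (μ.row M (colLen μ M 1 - 1) - 1) % h = μ.row M (colLen μ M 1 - 1) - 1 :=
              Nat.mod_eq_of_lt (by omega)
            rw [← hcase]
            omega
          rw [hdiv, hmod,
            show μ.row M (colLen μ M 1 - 1) - 1 + 1 = μ.row M (colLen μ M 1 - 1) from by omega]
          exact_mod_cast colLen_decMP_last μ M (colLen μ M 1 - 1) h2
        · rw [if_neg hcase, add_zero]
          have hor : a / h ≠ M ∨ a % h + 1 ≠ μ.row M (colLen μ M 1 - 1) := by
            by_contra hcon
            push_neg at hcon
            apply hcase
            have hdm := Nat.div_add_mod a h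
            rw [hcon.1] at hdm
            rw [show μ.row M (colLen μ M 1 - 1) - 1 = a % h from by omega]
            exact hdm
          exact_mod_cast colLen_decMP_eq μ M (colLen μ M 1 - 1) h2 (a / h) (a % h + 1) hor
    refine ⟨⟨?_, ?_⟩, hpts, ?_, ?_⟩
    · intro k hk
      rcases Nat.lt_or_ge k n with hk' | hk'
      · rw [htp k hk']
        exact IH1.1 k hk'
      · have hkn : k = n := by omega
        subst hkn
        rw [hs]
        have hlt1 : μ.row M (colLen μ M 1 - 1) - 1 < h := by omega
        calc h * M + (μ.row M (colLen μ M 1 - 1) - 1) < h * M + h :=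
              Nat.add_lt_add_left hlt1 _
          _ = h * (M + 1) := by ring
          _ ≤ h * ℓ := Nat.mul_le_mul_left h (by omega)
    · intro k hk
      unfold tPath
      rw [if_neg (by omega)]
    · intro k hk m i j hm hij hjh
      rcases Nat.lt_or_ge k (n + 1) with hk' | hk'
      · have hk'' : k ≤ n := by omega
        rw [hagree k hk'']
        exact IH3 k hk'' m i j hm hij hjh
      · have hkeq : k = n + 1 := by omega
        subst hkeq
        rw [hpts (n + 1) le_rfl, show n + 1 - (n + 1) = 0 from by omega, hPD0]
        unfold pairV
        rw [ptD_eq_colLen h μ (h * m + i), ptD_eq_colLen h μ (h * m + j)]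
        have hdiv1 : (h * m + i) / h = m := by
          have h0 : i / h = 0 := Nat.div_eq_of_lt (by omega)
          have h1 := Nat.mul_add_div (show 0 < h by omega) m i
          omega
        have hmod1 : (h * m + i) % h = i := by
          have h0 := Nat.mul_add_mod h m i
          have h1 : i % h = i := Nat.mod_eq_of_lt (by omega)
          omega
        have hdiv2 : (h * m + j) / h = m := by
          have h0 : j / h = 0 := Nat.div_eq_of_lt (by omega)
          have h1 := Nat.mul_add_div (show 0 < h by omega) m j
          omega
        have hmod2 : (h * m + j) % h = j := by
          have h0 := Nat.mul_add_mod h m j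
          have h1 : j % h = j := Nat.mod_eq_of_lt (by omega)
          omega
        rw [hdiv1, hmod1, hdiv2, hmod2,
          rhoZ_decode e h κ (by omega) m i (by omega),
          rhoZ_decode e h κ (by omega) m j (by omega)]
        have hcc : colLen μ m (j + 1) ≤ colLen μ m (i + 1) :=
          colLen_anti μ m (by omega) (by omega)
        have hc1 : ((colLen μ m (j + 1) : ℕ) : ℝ) ≤ ((colLen μ m (i + 1) : ℕ) : ℝ) := by
          exact_mod_cast hcc
        have hc2 : (i : ℝ) < (j : ℝ) := by exact_mod_cast hij
        push_cast
        linarith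
    · unfold pathDeg
      rw [Finset.sum_range_succ]
      have hsumc : ∀ k ∈ Finset.range n,
          stepDeg e h ℓ κ (pts (tPath h ℓ (n + 1) μ) k) (pts (tPath h ℓ (n + 1) μ) (k + 1))
          = stepDeg e h ℓ κ (pts (tPath h ℓ n (decMP' μ M (colLen μ M 1 - 1) h2)) k)
            (pts (tPath h ℓ n (decMP' μ M (colLen μ M 1 - 1) h2)) (k + 1)) := by
        intro k hk
        have hk' := Finset.mem_range.1 hk
        rw [hagree k (by omega), hagree (k + 1) (by omega)]
      rw [Finset.sum_congr rfl hsumc]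
      unfold pathDeg at IH4
      rw [IH4, zero_add]
      unfold stepDeg
      apply Finset.sum_eq_zero
      intro i hi
      apply Finset.sum_eq_zero
      intro j hj
      split_ifs with hij
      · have hlastK' : colLen (decMP' μ M (colLen μ M 1 - 1) h2) M
            (μ.row M (colLen μ M 1 - 1)) = colLen μ M 1 - 1 := by
          have ha := colLen_decMP_last μ M (colLen μ M 1 - 1) h2
          have hb := colLen_row_last μ M hK
          omega
        have hM1' : colLen (decMP' μ M (colLen μ M 1 - 1) h2) M 1 ≤ colLen μ M 1 :=
          colLen_decMP_le μ M (colLen μ M 1 - 1) h2 M 1 le_rfl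
        have hmaxd : ∀ t, t < ℓ → t ≠ M →
            1 ≤ colLen (decMP' μ M (colLen μ M 1 - 1) h2) t 1 →
            ((t : ℤ) + 1) + (ℓ : ℤ) * ((colLen (decMP' μ M (colLen μ M 1 - 1) h2) t 1 : ℤ)
              - ((decMP' μ M (colLen μ M 1 - 1) h2).row t
                  (colLen (decMP' μ M (colLen μ M 1 - 1) h2) t 1 - 1) : ℤ)) <
            ((M : ℤ) + 1) + (ℓ : ℤ) * ((colLen μ M 1 : ℤ)
              - (μ.row M (colLen μ M 1 - 1) : ℤ)) := by
          intro t ht htne ht1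
          have hc1 : colLen (decMP' μ M (colLen μ M 1 - 1) h2) t 1 = colLen μ t 1 :=
            colLen_decMP_eq μ M (colLen μ M 1 - 1) h2 t 1 (Or.inl htne)
          have hrt : (decMP' μ M (colLen μ M 1 - 1) h2).row t (colLen μ t 1 - 1)
              = μ.row t (colLen μ t 1 - 1) :=
            decMP'_row_ne μ M (colLen μ M 1 - 1) h2 t _ htne
          rw [hc1, hrt]
          exact hmax' t ht htne (by rw [← hc1]; exact ht1)
        have hz : ∀ r : ℤ, dval e h κ (pts (tPath h ℓ (n + 1) μ) n)
            (pts (tPath h ℓ (n + 1) μ) (n + 1)) i j r = 0 := by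
          intro r
          refine step_H e h ℓ κ hh hl he hadm hnorm
            (decMP' μ M (colLen μ M 1 - 1) h2) hcols'
            M (colLen μ M 1) (μ.row M (colLen μ M 1 - 1))
            (h * M + (μ.row M (colLen μ M 1 - 1) - 1))
            hMl hK hcX1 hcXh hlastK' hM1' hmaxd rfl _ _
            ?_ ?_ i j hij (Finset.mem_range.1 hj) r
          · intro a
            rw [show pts (tPath h ℓ (n + 1) μ) n a
                = ptD h (diag (decMP' μ M (colLen μ M 1 - 1) h2)) a from by rw [hptsn]]
            exact ptD_eq_colLen h (decMP' μ M (colLen μ M 1 - 1) h2) a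
          · intro a
            rw [pts_succ, hs]
        rw [finsum_congr hz, finsum_zero]
      · rfl

end BC
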